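/- Suppose X and Y are topological spaces, p ∈ X, q ∈ Y, A is a local base at p in X, B is a local base at q in Y, f : X → Y is continuous and open, and f(p) = q. Then ⟨B, ⊇⟩ ≤_T ⟨A, ⊇⟩. -/

import Mathlib

open Cardinal

/-- A subset `S` of a quasiorder `⟨α, r⟩` is bounded if it has an upper bound. -/
def TBounded {α : Type*} (r : α → α → Prop) (S : Set α) : Prop :=
  ∃ b, ∀ x ∈ S, r x b

/-- A subset `C` of `⟨α, r⟩` is cofinal if every element lies below a member of `C`. -/
def TCofinal {α : Type*} (r : α → α → Prop) (C : Set α) : Prop :=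
  ∀ x, ∃ c ∈ C, r x c

/-- A Tukey map: the image of every unbounded set is unbounded. -/
def IsTukeyMap {α β : Type*} (ra : α → α → Prop) (rb : β → β → Prop) (f : α → β) : Prop :=
  ∀ S : Set α, ¬ TBounded ra S → ¬ TBounded rb (f '' S)

/-- Tukey reducibility `P ≤_T Q`: there is a Tukey map from `P` to `Q`. -/
def TukeyLE {α β : Type*} (ra : α → α → Prop) (rb : β → β → Prop) : Prop :=
  ∃ f : α → β, IsTukeyMap ra rb f

/-- Tukey equivalence `P ≡_T Q`. -/
def TukeyEquiv {α β : Type*} (ra : α → α → Prop) (rb : β → β → Prop) : Prop :=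
  TukeyLE ra rb ∧ TukeyLE rb ra

/-- Strict Tukey reducibility `P <_T Q`. -/
def TukeyLT {α β : Type*} (ra : α → α → Prop) (rb : β → β → Prop) : Prop :=
  TukeyLE ra rb ∧ ¬ TukeyLE rb ra

/-- A directed set: a preorder in which every finite subset (in particular `∅` and pairs)
has an upper bound; equivalently, a nonempty directed preorder. -/
structure IsDirectedSet {α : Type*} (r : α → α → Prop) : Prop where
  nonempty : Nonempty α
  refl : ∀ x, r x x
  trans : ∀ {x y z}, r x y → r y z → r x z
  directed : ∀ x y, ∃ z, r x z ∧ r y z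

/-- `A` is a local base at `p`: a family of open neighborhoods of `p` such that every
open set containing `p` contains a member of `A`. -/
def IsLocalBase {X : Type*} [TopologicalSpace X] (p : X) (A : Set (Set X)) : Prop :=
  (∀ U ∈ A, IsOpen U ∧ p ∈ U) ∧ ∀ V : Set X, IsOpen V → p ∈ V → ∃ U ∈ A, U ⊆ V

/-- If `f : X → Y` is continuous and open with `f p = q`, then for local bases `A` at `p`
and `B` at `q`, we have `⟨B, ⊇⟩ ≤_T ⟨A, ⊇⟩`. -/
theorem stmt8 {X Y : Type*} [TopologicalSpace X] [TopologicalSpace Y]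
    (p : X) (q : Y) (A : Set (Set X)) (B : Set (Set Y))
    (hA : IsLocalBase p A) (hB : IsLocalBase q B)
    (f : X → Y) (hc : Continuous f) (ho : IsOpenMap f) (hpq : f p = q) :
    TukeyLE (fun U V : B => (V : Set Y) ⊆ (U : Set Y))
      (fun U V : A => (V : Set X) ⊆ (U : Set X)) := by
  -- For each V ∈ B, pick g V ∈ A with g V ⊆ f ⁻¹' V.
  have hsel : ∀ V : B, ∃ U : A, (U : Set X) ⊆ f ⁻¹' (V : Set Y) := by
    rintro ⟨V, hV⟩
    obtain ⟨hVo, hqV⟩ := hB.1 V hV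
    obtain ⟨U, hUA, hU⟩ := hA.2 (f ⁻¹' V) (hVo.preimage hc) (by simp [hpq, hqV])
    exact ⟨⟨U, hUA⟩, hU⟩
  choose g hg using hsel
  refine ⟨g, fun S hS hb => hS ?_⟩
  obtain ⟨⟨U₀, hU₀A⟩, hU₀⟩ := hb
  -- f '' U₀ is open, contains q; pick W ∈ B inside it.
  have hU₀o : IsOpen (f '' U₀) := ho U₀ (hA.1 U₀ hU₀A).1
  have hqU₀ : q ∈ f '' U₀ := ⟨p, (hA.1 U₀ hU₀A).2, hpq⟩
  obtain ⟨W, hWB, hW⟩ := hB.2 (f '' U₀) hU₀o hqU₀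
  refine ⟨⟨W, hWB⟩, fun V hV => ?_⟩
  have h1 : U₀ ⊆ (g V : Set X) := hU₀ (g V) ⟨V, hV, rfl⟩
  calc W ⊆ f '' U₀ := hW
    _ ⊆ f '' (g V : Set X) := Set.image_mono h1
    _ ⊆ f '' (f ⁻¹' (V : Set Y)) := Set.image_mono (hg V)
    _ ⊆ (V : Set Y) := Set.image_preimage_subset f _
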